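/- With the notation below, for every integer a one has the polynomial identity (X − λ₁λ₂^a Y)(X − λ₂λ₃^a Y)(X − λ₃λ₁^a Y) = X³ − s_a X²Y + t_a XY² − Y³, where s_a = λ₁λ₂^a + λ₂λ₃^a + λ₃λ₁^a and t_a = λ₁^{−1}λ₂^{−a} + λ₂^{−1}λ₃^{−a} + λ₃^{−1}λ₁^{−a}; moreover s_a and t_a are rational integers, with s_a = Tr_{K/ℚ}(λ₁λ₂^a) and t_a = Tr_{K/ℚ}(λ₁^{−1}λ₂^{−a}) where K = ℚ(λ₁). -/

import Mathlib

set_option maxHeartbeats 1000000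

open Polynomial IntermediateField

private lemma aux_zpow_integral {x : ℂ} (hx : IsIntegral ℤ x) (hxi : IsIntegral ℤ x⁻¹)
    (a : ℤ) : IsIntegral ℤ (x ^ a) := by
  rcases le_or_gt 0 a with h | h
  · lift a to ℕ using h
    rw [zpow_natCast]; exact hx.pow _
  · have : x ^ a = (x⁻¹) ^ (-a).toNat := by
      rw [← zpow_natCast, Int.toNat_of_nonneg (by omega), inv_zpow, zpow_neg, inv_inv]
    rw [this]; exact hxi.pow _

private lemma aux_rat_int {q : ℚ} (h : IsIntegral ℤ q) : ∃ m : ℤ, (m : ℚ) = q :=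
  IsIntegrallyClosed.isIntegral_iff.mp h

theorem stmt_16 (n : ℤ) (l1 l2 l3 : ℂ)
    (hroot : Polynomial.aeval l1
      (X ^ 3 - C ((n : ℚ) - 1) * X ^ 2 - C ((n : ℚ) + 2) * X - 1 : Polynomial ℚ) = 0)
    (hl2 : l2 = -1 / (l1 + 1)) (hl3 : l3 = -(l1 + 1) / l1)
    (s t : ℤ → ℂ)
    (hs : ∀ a : ℤ, s a = l1 * l2 ^ a + l2 * l3 ^ a + l3 * l1 ^ a)
    (ht : ∀ a : ℤ, t a = l1⁻¹ * l2 ^ (-a) + l2⁻¹ * l3 ^ (-a) + l3⁻¹ * l1 ^ (-a))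
    (K : IntermediateField ℚ ℂ) (hK : K = IntermediateField.adjoin ℚ {l1})
    [FiniteDimensional ℚ K]
    (hmemS : ∀ a : ℤ, l1 * l2 ^ a ∈ K) (hmemT : ∀ a : ℤ, l1⁻¹ * l2 ^ (-a) ∈ K) :
    ∀ a : ℤ,
      (∀ X Y : ℂ,
        (X - l1 * l2 ^ a * Y) * (X - l2 * l3 ^ a * Y) * (X - l3 * l1 ^ a * Y)
          = X ^ 3 - s a * X ^ 2 * Y + t a * X * Y ^ 2 - Y ^ 3) ∧
      (∃ si : ℤ, s a = (si : ℂ)) ∧ (∃ ti : ℤ, t a = (ti : ℂ)) ∧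
      s a = ((Algebra.trace ℚ K ⟨l1 * l2 ^ a, hmemS a⟩ : ℚ) : ℂ) ∧
      t a = ((Algebra.trace ℚ K ⟨l1⁻¹ * l2 ^ (-a), hmemT a⟩ : ℚ) : ℂ) := by
  subst hK
  classical
  -- basic cubic relation
  have hc : l1^3 - ((n:ℂ)-1)*l1^2 - ((n:ℂ)+2)*l1 - 1 = 0 := by simpa using hroot
  have h0 : l1 ≠ 0 := by rintro rfl; norm_num at hc
  have h1 : l1 + 1 ≠ 0 := by
    intro h
    have hl : l1 = -1 := by linear_combination h
    subst hl
    have h2 : (1:ℂ) = 0 := by linear_combination hc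
    norm_num at h2
  have hl2' : l2 = -(l1+1)⁻¹ := by rw [hl2]; ring
  have h20 : l2 ≠ 0 := by rw [hl2']; simp [h1]
  have h30 : l3 ≠ 0 := by rw [hl3]; exact div_ne_zero (neg_ne_zero.mpr h1) h0
  have hprod : l1 * l2 * l3 = 1 := by rw [hl2, hl3]; field_simp
  have hsum : l1 + l2 + l3 = (n:ℂ) - 1 := by
    rw [hl2, hl3]; field_simp; linear_combination hc
  have hpair : l1*l2 + l1*l3 + l2*l3 = -((n:ℂ)+2) := by
    rw [hl2, hl3]; field_simp; linear_combination -hc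
  have hcyc2 : -(l2+1)⁻¹ = l3 := by rw [hl2', hl3]; field_simp; rw [show (-1 + (l1 + 1)) = l1 by ring, div_self h0]
  have hcyc3 : -(l3+1)⁻¹ = l1 := by rw [hl3]; field_simp; ring
  have hfact : ∀ z : ℂ, z^3 - ((n:ℂ)-1)*z^2 - ((n:ℂ)+2)*z - 1
      = (z - l1) * (z - l2) * (z - l3) := by
    intro z
    linear_combination z^2 * hsum - z * hpair + hprod
  -- minimal polynomial
  have hfmonic : (X ^ 3 - C ((n : ℚ) - 1) * X ^ 2 - C ((n : ℚ) + 2) * X - 1 : Polynomial ℚ).Monic := by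
    monicity!
  have hdeg : (X ^ 3 - C ((n : ℚ) - 1) * X ^ 2 - C ((n : ℚ) + 2) * X - 1 : Polynomial ℚ).natDegree = 3 := by
    compute_degree!
  have hmp : minpoly ℚ l1 = (X ^ 3 - C ((n : ℚ) - 1) * X ^ 2 - C ((n : ℚ) + 2) * X - 1 : Polynomial ℚ) := by
    have hmap : (X ^ 3 - C ((n : ℤ) - 1) * X ^ 2 - C ((n : ℤ) + 2) * X - 1 : Polynomial ℤ).map
        (algebraMap ℤ ℚ)
        = (X ^ 3 - C ((n : ℚ) - 1) * X ^ 2 - C ((n : ℚ) + 2) * X - 1 : Polynomial ℚ) := by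
      simp only [Polynomial.map_sub, Polynomial.map_mul, Polynomial.map_pow, Polynomial.map_X,
        Polynomial.map_C, Polynomial.map_one]
      push_cast
      norm_num [add_comm]
    have hfZmonic : (X ^ 3 - C ((n : ℤ) - 1) * X ^ 2 - C ((n : ℤ) + 2) * X - 1 : Polynomial ℤ).Monic := by
      monicity!
    have hirr : Irreducible (X ^ 3 - C ((n : ℚ) - 1) * X ^ 2 - C ((n : ℚ) + 2) * X - 1 : Polynomial ℚ) := by
      rw [irreducible_iff_roots_eq_zero_of_degree_le_three (by omega) (by omega)]
      rw [Multiset.eq_zero_iff_forall_notMem]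
      intro q hq
      rw [mem_roots hfmonic.ne_zero, IsRoot.def] at hq
      have hq' : aeval q (X ^ 3 - C ((n : ℤ) - 1) * X ^ 2 - C ((n : ℤ) + 2) * X - 1 : Polynomial ℤ) = 0 := by
        rw [aeval_def, ← eval_map, hmap]; exact hq
      obtain ⟨r, hr, hdvd⟩ := exists_integer_of_is_root_of_monic hfZmonic hq'
      have hc0 : (X ^ 3 - C ((n : ℤ) - 1) * X ^ 2 - C ((n : ℤ) + 2) * X - 1 : Polynomial ℤ).coeff 0 = -1 := by
        simp [coeff_one]
      rw [hc0] at hdvd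
      have hr1 : r = 1 ∨ r = -1 := by
        rcases Int.isUnit_iff.mp (isUnit_of_dvd_unit hdvd (by norm_num)) with h | h
        · exact Or.inl h
        · exact Or.inr h
      rw [hr] at hq
      rcases hr1 with h | h <;> subst h <;>
        simp only [eval_sub, eval_mul, eval_pow, eval_X, eval_C, eval_one, map_one, map_neg] at hq
      · have h2 : (2 * (n:ℚ) + 1) = 0 := by linarith
        have h3 : (2 * n + 1 : ℤ) = 0 := by exact_mod_cast h2
        omega
      · linarith
    exact (minpoly.eq_of_irreducible_of_monic hirr hroot hfmonic).symm
  -- roots are distinct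
  have hK2 : l1^2 + l1 + 1 ≠ 0 := by
    intro h
    have hq : aeval l1 (X^2 + X + 1 : Polynomial ℚ) = 0 := by
      simp only [map_add, map_one, map_pow, aeval_X, aeval_one]
      linear_combination h
    have hle := minpoly.degree_le_of_ne_zero ℚ l1 (by
      intro h'
      have := congrArg (fun p => Polynomial.coeff p 0) h'
      simp [coeff_one] at this) hq
    rw [hmp] at hle
    rw [Polynomial.degree_eq_natDegree hfmonic.ne_zero, hdeg] at hle
    have : ((X^2 + X + 1 : Polynomial ℚ)).degree ≤ 2 := by
      compute_degree
    have h3 : (3 : WithBot ℕ) ≤ 2 := le_trans hle this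
    norm_num at h3
  have h12 : l1 ≠ l2 := by
    intro h
    apply hK2
    rw [hl2'] at h
    have h' : l1 * (l1+1) = -1 := by
      nth_rewrite 1 [h]
      field_simp
    linear_combination h'
  have h13 : l1 ≠ l3 := by
    intro h
    apply hK2
    rw [hl3] at h
    have h' : l1 * l1 = -(l1+1) := by
      nth_rewrite 1 [h]
      field_simp
    linear_combination h'
  have h23 : l2 ≠ l3 := by
    intro h
    apply hK2
    rw [hl2', hl3] at h
    field_simp at h
    linear_combination h
  -- integrality
  have hint : IsIntegral ℚ l1 := IsAlgebraic.isIntegral ⟨_, hfmonic.ne_zero, hroot⟩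
  have haevalC : ∀ z : ℂ, aeval z (X ^ 3 - C ((n : ℚ) - 1) * X ^ 2 - C ((n : ℚ) + 2) * X - 1 : Polynomial ℚ)
      = z^3 - ((n:ℂ)-1)*z^2 - ((n:ℂ)+2)*z - 1 := by
    intro z; simp
  have hintZ : ∀ z : ℂ, (z - l1) * (z - l2) * (z - l3) = 0 → IsIntegral ℤ z := by
    intro z hz
    refine ⟨X ^ 3 - C ((n : ℤ) - 1) * X ^ 2 - C ((n : ℤ) + 2) * X - 1, by monicity!, ?_⟩
    have hthis : z^3 - ((n:ℂ)-1)*z^2 - ((n:ℂ)+2)*z - 1 = 0 := by rw [hfact z, hz]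
    rw [← aeval_def]
    simp only [map_sub, map_mul, map_pow, aeval_X, aeval_C, map_one, eq_intCast, map_intCast, map_add, map_ofNat]
    push_cast
    linear_combination hthis
  have hInt1 : IsIntegral ℤ l1 := hintZ l1 (by ring)
  have hInt2 : IsIntegral ℤ l2 := hintZ l2 (by ring)
  have hInt3 : IsIntegral ℤ l3 := hintZ l3 (by ring)
  have hInv1 : l1⁻¹ = l2 * l3 := inv_eq_of_mul_eq_one_right (by linear_combination hprod)
  have hInv2 : l2⁻¹ = l3 * l1 := inv_eq_of_mul_eq_one_right (by linear_combination hprod)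
  have hInv3 : l3⁻¹ = l1 * l2 := inv_eq_of_mul_eq_one_right (by linear_combination hprod)
  have hInt1i : IsIntegral ℤ l1⁻¹ := by rw [hInv1]; exact hInt2.mul hInt3
  have hInt2i : IsIntegral ℤ l2⁻¹ := by rw [hInv2]; exact hInt3.mul hInt1
  have hInt3i : IsIntegral ℤ l3⁻¹ := by rw [hInv3]; exact hInt1.mul hInt2
  -- the three embeddings
  set g : ℚ⟮l1⟯ := AdjoinSimple.gen ℚ l1 with hgdef
  have hgen : algebraMap ℚ⟮l1⟯ ℂ g = l1 := AdjoinSimple.algebraMap_gen ℚ l1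
  have hmem : ∀ c : ℂ, (c - l1) * (c - l2) * (c - l3) = 0 →
      c ∈ (minpoly ℚ l1).aroots ℂ := by
    intro c hcz
    rw [hmp, mem_aroots]
    refine ⟨hfmonic.ne_zero, ?_⟩
    rw [haevalC, hfact c, hcz]
  set φ1 : ℚ⟮l1⟯ →ₐ[ℚ] ℂ := (algHomAdjoinIntegralEquiv ℚ hint).symm ⟨l1, hmem l1 (by ring)⟩ with hφ1def
  set φ2 : ℚ⟮l1⟯ →ₐ[ℚ] ℂ := (algHomAdjoinIntegralEquiv ℚ hint).symm ⟨l2, hmem l2 (by ring)⟩ with hφ2def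
  set φ3 : ℚ⟮l1⟯ →ₐ[ℚ] ℂ := (algHomAdjoinIntegralEquiv ℚ hint).symm ⟨l3, hmem l3 (by ring)⟩ with hφ3def
  have hφ1g : φ1 g = l1 := algHomAdjoinIntegralEquiv_symm_apply_gen ℚ hint _
  have hφ2g : φ2 g = l2 := algHomAdjoinIntegralEquiv_symm_apply_gen ℚ hint _
  have hφ3g : φ3 g = l3 := algHomAdjoinIntegralEquiv_symm_apply_gen ℚ hint _
  have hext : ∀ σ τ : ℚ⟮l1⟯ →ₐ[ℚ] ℂ, σ g = τ g → σ = τ := by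
    intro σ τ h
    apply (adjoin.powerBasis hint).algHom_ext
    rwa [adjoin.powerBasis_gen]
  have hclass : ∀ σ : ℚ⟮l1⟯ →ₐ[ℚ] ℂ, σ = φ1 ∨ σ = φ2 ∨ σ = φ3 := by
    intro σ
    have hz : aeval (σ g) (minpoly ℚ l1) = 0 := by
      rw [Polynomial.aeval_algHom_apply]; exact (congrArg σ (aeval_gen_minpoly ℚ l1)).trans (map_zero σ)
    rw [hmp, haevalC, hfact (σ g)] at hz
    rcases mul_eq_zero.mp hz with hz' | hz'
    · rcases mul_eq_zero.mp hz' with hz'' | hz''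
      · exact Or.inl (hext _ _ (by rw [hφ1g, sub_eq_zero.mp hz'']))
      · exact Or.inr (Or.inl (hext _ _ (by rw [hφ2g, sub_eq_zero.mp hz''])))
    · exact Or.inr (Or.inr (hext _ _ (by rw [hφ3g, sub_eq_zero.mp hz'])))
  have hne12 : φ1 ≠ φ2 := fun h => h12 (by rw [← hφ1g, h, hφ2g])
  have hne13 : φ1 ≠ φ3 := fun h => h13 (by rw [← hφ1g, h, hφ3g])
  have hne23 : φ2 ≠ φ3 := fun h => h23 (by rw [← hφ2g, h, hφ3g])
  have huniv : (Finset.univ : Finset (ℚ⟮l1⟯ →ₐ[ℚ] ℂ)) = {φ1, φ2, φ3} :=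
    (Finset.eq_univ_iff_forall.mpr (fun σ => by
      rcases hclass σ with h | h | h <;> simp [h])).symm
  intro a
  -- identities for the polynomial part
  have hzp : l2 ^ a * l3 ^ a * l1 ^ a = 1 := by
    rw [← mul_zpow, ← mul_zpow, show l2 * l3 * l1 = 1 from by linear_combination hprod, one_zpow]
  have hprodA : (l1 * l2 ^ a) * (l2 * l3 ^ a) * (l3 * l1 ^ a) = 1 := by
    calc (l1 * l2 ^ a) * (l2 * l3 ^ a) * (l3 * l1 ^ a)
        = (l1 * l2 * l3) * (l2 ^ a * l3 ^ a * l1 ^ a) := by ring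
      _ = 1 := by rw [hprod, hzp, one_mul]
  have hinv1A : (l1 * l2 ^ a)⁻¹ = (l2 * l3 ^ a) * (l3 * l1 ^ a) :=
    inv_eq_of_mul_eq_one_right (by rw [← mul_assoc]; exact hprodA)
  have hinv2A : (l2 * l3 ^ a)⁻¹ = (l3 * l1 ^ a) * (l1 * l2 ^ a) :=
    inv_eq_of_mul_eq_one_right (by rw [show (l2 * l3 ^ a) * ((l3 * l1 ^ a) * (l1 * l2 ^ a)) = (l1 * l2 ^ a) * (l2 * l3 ^ a) * (l3 * l1 ^ a) from by ring]; exact hprodA)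
  have hinv3A : (l3 * l1 ^ a)⁻¹ = (l1 * l2 ^ a) * (l2 * l3 ^ a) :=
    inv_eq_of_mul_eq_one_right (by rw [show (l3 * l1 ^ a) * ((l1 * l2 ^ a) * (l2 * l3 ^ a)) = (l1 * l2 ^ a) * (l2 * l3 ^ a) * (l3 * l1 ^ a) from by ring]; exact hprodA)
  have hT : t a = (l2 * l3 ^ a) * (l3 * l1 ^ a) + (l3 * l1 ^ a) * (l1 * l2 ^ a)
      + (l1 * l2 ^ a) * (l2 * l3 ^ a) := by
    rw [ht a, ← hinv1A, ← hinv2A, ← hinv3A, zpow_neg, zpow_neg, zpow_neg,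
      ← mul_inv, ← mul_inv, ← mul_inv]
  have hpoly : ∀ X Y : ℂ,
      (X - l1 * l2 ^ a * Y) * (X - l2 * l3 ^ a * Y) * (X - l3 * l1 ^ a * Y)
        = X ^ 3 - s a * X ^ 2 * Y + t a * X * Y ^ 2 - Y ^ 3 := by
    intro X Y
    rw [hs a, hT]
    linear_combination (-Y^3) * hprodA
  -- embedding values
  have hσS : ∀ (σ : ℚ⟮l1⟯ →ₐ[ℚ] ℂ), σ ⟨l1 * l2 ^ a, hmemS a⟩ = σ g * (-(σ g + 1)⁻¹) ^ a := by
    intro σ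
    have hxS : (⟨l1 * l2 ^ a, hmemS a⟩ : ℚ⟮l1⟯) = g * (-(g + 1)⁻¹) ^ a := by
      apply_fun (algebraMap ℚ⟮l1⟯ ℂ) using (algebraMap ℚ⟮l1⟯ ℂ).injective
      rw [map_mul, map_zpow₀, map_neg, map_inv₀, map_add, map_one, hgen, ← hl2']
      rfl
    rw [hxS, map_mul, map_zpow₀, map_neg, map_inv₀, map_add, map_one]
  have hσT : ∀ (σ : ℚ⟮l1⟯ →ₐ[ℚ] ℂ), σ ⟨l1⁻¹ * l2 ^ (-a), hmemT a⟩
      = (σ g)⁻¹ * (-(σ g + 1)⁻¹) ^ (-a) := by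
    intro σ
    have hxT : (⟨l1⁻¹ * l2 ^ (-a), hmemT a⟩ : ℚ⟮l1⟯) = g⁻¹ * (-(g + 1)⁻¹) ^ (-a) := by
      apply_fun (algebraMap ℚ⟮l1⟯ ℂ) using (algebraMap ℚ⟮l1⟯ ℂ).injective
      rw [map_mul, map_inv₀, map_zpow₀, map_neg, map_inv₀, map_add, map_one, hgen, ← hl2']
      rfl
    rw [hxT, map_mul, map_inv₀, map_zpow₀, map_neg, map_inv₀, map_add, map_one]
  -- trace computations
  have hn12 : φ1 ∉ ({φ2, φ3} : Finset _) := by simp [hne12, hne13]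
  have hn23 : φ2 ∉ ({φ3} : Finset _) := by simp [hne23]
  have htrS : algebraMap ℚ ℂ (Algebra.trace ℚ ℚ⟮l1⟯ ⟨l1 * l2 ^ a, hmemS a⟩) = s a := by
    rw [trace_eq_sum_embeddings (E := ℂ), huniv, Finset.sum_insert hn12,
      Finset.sum_insert hn23, Finset.sum_singleton, hσS φ1, hσS φ2, hσS φ3,
      hφ1g, hφ2g, hφ3g, hcyc2, hcyc3, ← hl2', hs a]
    ring
  have htrT : algebraMap ℚ ℂ (Algebra.trace ℚ ℚ⟮l1⟯ ⟨l1⁻¹ * l2 ^ (-a), hmemT a⟩) = t a := by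
    rw [trace_eq_sum_embeddings (E := ℂ), huniv, Finset.sum_insert hn12,
      Finset.sum_insert hn23, Finset.sum_singleton, hσT φ1, hσT φ2, hσT φ3,
      hφ1g, hφ2g, hφ3g, hcyc2, hcyc3, ← hl2', ht a]
    ring
  have hTrS : s a = ((Algebra.trace ℚ ℚ⟮l1⟯ ⟨l1 * l2 ^ a, hmemS a⟩ : ℚ) : ℂ) := by
    rw [← htrS, eq_ratCast]
  have hTrT : t a = ((Algebra.trace ℚ ℚ⟮l1⟯ ⟨l1⁻¹ * l2 ^ (-a), hmemT a⟩ : ℚ) : ℂ) := by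
    rw [← htrT, eq_ratCast]
  -- integrality
  have hIntS : IsIntegral ℤ (s a) := by
    rw [hs a]
    exact ((hInt1.mul (aux_zpow_integral hInt2 hInt2i a)).add
      (hInt2.mul (aux_zpow_integral hInt3 hInt3i a))).add
      (hInt3.mul (aux_zpow_integral hInt1 hInt1i a))
  have hIntT : IsIntegral ℤ (t a) := by
    rw [ht a]
    exact ((hInt1i.mul (aux_zpow_integral hInt2 hInt2i (-a))).add
      (hInt2i.mul (aux_zpow_integral hInt3 hInt3i (-a)))).add
      (hInt3i.mul (aux_zpow_integral hInt1 hInt1i (-a)))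
  have hqS : IsIntegral ℤ (Algebra.trace ℚ ℚ⟮l1⟯ ⟨l1 * l2 ^ a, hmemS a⟩) := by
    rw [← isIntegral_algebraMap_iff (algebraMap ℚ ℂ).injective, htrS]
    exact hIntS
  have hqT : IsIntegral ℤ (Algebra.trace ℚ ℚ⟮l1⟯ ⟨l1⁻¹ * l2 ^ (-a), hmemT a⟩) := by
    rw [← isIntegral_algebraMap_iff (algebraMap ℚ ℂ).injective, htrT]
    exact hIntT
  obtain ⟨mS, hmS⟩ := aux_rat_int hqS
  obtain ⟨mT, hmT⟩ := aux_rat_int hqT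
  refine ⟨hpoly, ⟨mS, ?_⟩, ⟨mT, ?_⟩, hTrS, hTrT⟩
  · rw [hTrS, ← hmS]; push_cast; rfl
  · rw [hTrT, ← hmT]; push_cast; rfl
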